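/- A maniplex M has the strong path intersection property if and only if it has the weak path intersection property. -/

import Mathlib

/-- An `n`-maniplex on vertex (flag) set `V`: a nonempty, connected, properly
`n`-edge-coloured simple `n`-regular graph (encoded by the fixed-point-free
involutions `σ i` giving the unique `i`-neighbour of each vertex) such that the
2-factors of colours `i`, `j` with `|i - j| > 1` are 4-cycles. -/
structure Maniplex (n : ℕ) (V : Type) where
  nonempty : Nonempty V
  σ : Fin n → V → V
  invol : ∀ i v, σ i (σ i v) = v
  nofix : ∀ i v, σ i v ≠ v
  conn : ∀ u v : V, Relation.ReflTransGen (fun x y => ∃ i, σ i x = y) u v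
  comm : ∀ i j : Fin n, (i : ℕ) + 1 < (j : ℕ) → ∀ v,
    σ i (σ j v) = σ j (σ i v) ∧ σ i v ≠ σ j v

namespace Maniplex

variable {n : ℕ} {V : Type}

/-- There is a path from `u` to `v` using only edges with colours in `A`. -/
def ReachIn (M : Maniplex n V) (A : Set (Fin n)) (u v : V) : Prop :=
  Relation.ReflTransGen (fun x y => ∃ i ∈ A, M.σ i x = y) u v

/-- The `i`-face of `M` containing `v`: the connected component of `v` in the
spanning subgraph with all edges of colour `i` deleted. -/
def face (M : Maniplex n V) (i : Fin n) (v : V) : Set V :=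
  {u | M.ReachIn {j | j ≠ i} v u}

/-- `S` is an `i`-face of `M`. -/
def IsFace (M : Maniplex n V) (i : Fin n) (S : Set V) : Prop :=
  ∃ v, S = M.face i v

end Maniplex
namespace Maniplex

variable {n : ℕ} {V : Type}

/-- The type of (proper) faces of a maniplex: a rank together with a face of that rank. -/
def FaceT (M : Maniplex n V) : Type := {F : Fin n × Set V // M.IsFace F.1 F.2}

/-- The order on faces: `F ≤ G` iff `rank F ≤ rank G` and `F ∩ G ≠ ∅`. -/
def faceLe (M : Maniplex n V) (F G : M.FaceT) : Prop :=
  F.1.1 ≤ G.1.1 ∧ (F.1.2 ∩ G.1.2).Nonempty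

/-- The faces of `M` together with adjoined minimum `none` and maximum `some none`. -/
def PFace (M : Maniplex n V) : Type := Option (Option M.FaceT)

/-- The order on `P_M` (with the improper minimum and maximum adjoined). -/
def ple (M : Maniplex n V) : M.PFace → M.PFace → Prop
  | none, _ => True
  | _, some none => True
  | some (some F), some (some G) => M.faceLe F G
  | _, _ => False

/-- The rank function of `P_M`. -/
def prank (M : Maniplex n V) : M.PFace → ℤ
  | none => -1
  | some none => (n : ℤ)
  | some (some F) => ((F.1.1 : ℕ) : ℤ)

/-- The component intersection property: for every chain of faces, the
intersection of the faces is a connected subgraph of `M`. -/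
def CIP (M : Maniplex n V) : Prop :=
  ∀ (k : ℕ) (r : Fin k → Fin n) (S : Fin k → Set V),
    (∀ a, M.IsFace (r a) (S a)) →
    (∀ a b, (S a ∩ S b).Nonempty) →
    ∀ u v : V, (∀ a, u ∈ S a) → (∀ a, v ∈ S a) →
      M.ReachIn {c | ∀ a, c ≠ r a} u v

/-- The diamond condition for the poset `P_M`. -/
def Diamond (M : Maniplex n V) : Prop :=
  ∀ (i : Fin n) (E F : M.PFace), M.ple E F →
    M.prank E = ((i : ℕ) : ℤ) - 1 → M.prank F = ((i : ℕ) : ℤ) + 1 →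
    ∃ H₁ H₂ : M.PFace, H₁ ≠ H₂ ∧
      ∀ H : M.PFace,
        (M.prank H = ((i : ℕ) : ℤ) ∧ M.ple E H ∧ M.ple H F) ↔ (H = H₁ ∨ H = H₂)

/-- A maximal chain of proper faces of `P_M`: one face of each rank,
pairwise incident. -/
def IsFlag (M : Maniplex n V) (S : Fin n → Set V) : Prop :=
  (∀ i, M.IsFace i (S i)) ∧ ∀ i j, ((S i) ∩ (S j)).Nonempty

/-- `P_M` is faithful: every maximal chain of proper faces has a unique common vertex. -/
def Faithful (M : Maniplex n V) : Prop :=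
  ∀ S : Fin n → Set V, M.IsFlag S → ∃! v : V, ∀ i, v ∈ S i

/-- Strong flag connectivity of `P_M`: any two maximal chains `Φ`, `Ψ` are joined
by a sequence of successively adjacent maximal chains all containing `Φ ∩ Ψ`. -/
def SFC (M : Maniplex n V) : Prop :=
  ∀ Φ Ψ : Fin n → Set V, M.IsFlag Φ → M.IsFlag Ψ →
    Relation.ReflTransGen
      (fun X Y => M.IsFlag Y ∧ (∃ j, X j ≠ Y j ∧ ∀ l, l ≠ j → X l = Y l) ∧
        ∀ i, Φ i = Ψ i → Y i = Φ i) Φ Ψ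

/-- The strong path intersection property. -/
def SPIP (M : Maniplex n V) : Prop :=
  ∀ (A B : Set (Fin n)) (u v : V),
    M.ReachIn A u v → M.ReachIn B u v → M.ReachIn (A ∩ B) u v

/-- The weak path intersection property. -/
def WPIP (M : Maniplex n V) : Prop :=
  ∀ i j : Fin n, i < j → ∀ u v : V,
    M.ReachIn {c | i < c} u v → M.ReachIn {c | c < j} u v →
    M.ReachIn {c | i < c ∧ c < j} u v

/-! ### Auxiliary lemmas for the proof of `spip_iff_wpip` -/

section Aux

variable (M : Maniplex n V)

lemma reach_mono {A B : Set (Fin n)} (h : A ⊆ B) {u v : V}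
    (hr : M.ReachIn A u v) : M.ReachIn B u v :=
  Relation.ReflTransGen.mono (fun _ _ ⟨i, hi, hs⟩ => ⟨i, h hi, hs⟩) _ _ hr

lemma reach_trans {A : Set (Fin n)} {u v w : V}
    (h1 : M.ReachIn A u v) (h2 : M.ReachIn A v w) : M.ReachIn A u w :=
  Relation.ReflTransGen.trans h1 h2

lemma reach_symm {A : Set (Fin n)} {u v : V}
    (hr : M.ReachIn A u v) : M.ReachIn A v u := by
  induction hr with
  | refl => exact Relation.ReflTransGen.refl
  | tail _ h ih =>
    obtain ⟨i, hi, hs⟩ := h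
    exact Relation.ReflTransGen.head ⟨i, hi, by rw [← hs, M.invol]⟩ ih

lemma comm' {a b : Fin n} (h : (a : ℕ) + 1 < (b : ℕ) ∨ (b : ℕ) + 1 < (a : ℕ))
    (x : V) : M.σ a (M.σ b x) = M.σ b (M.σ a x) := by
  rcases h with h | h
  · exact (M.comm a b h x).1
  · exact ((M.comm b a h x).1).symm

lemma reach_map {A : Set (Fin n)} {i : Fin n}
    (hcomm : ∀ a ∈ A, ∀ x : V, M.σ i (M.σ a x) = M.σ a (M.σ i x))
    {u v : V} (hr : M.ReachIn A u v) : M.ReachIn A (M.σ i u) (M.σ i v) := by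
  induction hr with
  | refl => exact Relation.ReflTransGen.refl
  | tail _ h ih =>
    obtain ⟨a, ha, hs⟩ := h
    exact ih.tail ⟨a, ha, by rw [← hs, hcomm a ha]⟩

/-- A path avoiding colour `c` can be rearranged into a high part followed by
a low part, using that colours `< c` commute with colours `> c`. -/
lemma reach_split {A : Set (Fin n)} {c : Fin n} (hc : c ∉ A)
    {u v : V} (hr : M.ReachIn A u v) :
    ∃ m : V, M.ReachIn (A ∩ {x | c < x}) u m ∧ M.ReachIn (A ∩ {x | x < c}) m v := by
  induction hr with
  | refl => exact ⟨u, Relation.ReflTransGen.refl, Relation.ReflTransGen.refl⟩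
  | tail _ h ih =>
    obtain ⟨m, h1, h2⟩ := ih
    obtain ⟨a, ha, hs⟩ := h
    rcases lt_trichotomy a c with hac | hac | hac
    · exact ⟨m, h1, h2.tail ⟨a, ⟨ha, hac⟩, hs⟩⟩
    · exact absurd ha (hac ▸ hc)
    · refine ⟨M.σ a m, h1.tail ⟨a, ⟨ha, hac⟩, rfl⟩, ?_⟩
      have hmap := M.reach_map (A := A ∩ {x | x < c}) (i := a)
        (fun b hb x => M.comm' (Or.inr (by
          have h1 : (b : ℕ) < (c : ℕ) := hb.2
          have h2 : (c : ℕ) < (a : ℕ) := hac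
          omega)) x) h2
      rwa [hs] at hmap

lemma reach_split' {A : Set (Fin n)} {c : Fin n} (hc : c ∉ A)
    {u v : V} (hr : M.ReachIn A u v) :
    ∃ m : V, M.ReachIn (A ∩ {x | x < c}) u m ∧ M.ReachIn (A ∩ {x | c < x}) m v := by
  obtain ⟨m, h1, h2⟩ := M.reach_split hc (M.reach_symm hr)
  exact ⟨m, M.reach_symm h2, M.reach_symm h1⟩

/-- Intersecting an arbitrary path with an up-set path. -/
lemma reach_inter_up (hW : M.WPIP) {i : Fin n} {A : Set (Fin n)} {u v : V}
    (h1 : M.ReachIn {c | i < c} u v) (h2 : M.ReachIn A u v) :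
    M.ReachIn (A ∩ {c | i < c}) u v := by
  by_cases hsub : {c : Fin n | i < c} ⊆ A
  · have hss : {c : Fin n | i < c} ⊆ A ∩ {c | i < c} := fun x hx => ⟨hsub hx, hx⟩
    exact M.reach_mono hss h1
  · obtain ⟨d0, hd0A, hd0i⟩ := Set.not_subset.mp hsub
    obtain ⟨d, hd, hdmin⟩ := Set.exists_min_image {x : Fin n | i < x ∧ x ∉ A} id
      (Set.toFinite _) ⟨d0, hd0A, hd0i⟩
    obtain ⟨hdi, hdA⟩ := hd
    obtain ⟨m, hum, hmv⟩ := M.reach_split hdA h2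
    have hs1 : A ∩ {x | d < x} ⊆ {c | i < c} := fun x hx => lt_trans hdi hx.2
    have hmu : M.ReachIn {c | i < c} m u := M.reach_mono hs1 (M.reach_symm hum)
    have hm1 : M.ReachIn {c | i < c} m v := M.reach_trans hmu h1
    have hs2 : A ∩ {x | x < d} ⊆ {c | c < d} := fun x hx => hx.2
    have hm2 : M.ReachIn {c | c < d} m v := M.reach_mono hs2 hmv
    have hmid := hW i d hdi m v hm1 hm2
    have hs3 : {c : Fin n | i < c ∧ c < d} ⊆ A ∩ {c | i < c} := by
      intro x hx
      refine ⟨?_, hx.1⟩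
      by_contra hxA
      exact absurd hx.2 (not_lt.mpr (hdmin x ⟨hx.1, hxA⟩))
    have hmid' : M.ReachIn (A ∩ {c | i < c}) m v := M.reach_mono hs3 hmid
    have hs4 : A ∩ {x | d < x} ⊆ A ∩ {c | i < c} :=
      fun x hx => ⟨hx.1, lt_trans hdi hx.2⟩
    exact M.reach_trans (M.reach_mono hs4 hum) hmid'

/-- Intersecting an arbitrary path with a down-set path. -/
lemma reach_inter_down (hW : M.WPIP) {j : Fin n} {A : Set (Fin n)} {u v : V}
    (h1 : M.ReachIn {c | c < j} u v) (h2 : M.ReachIn A u v) :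
    M.ReachIn (A ∩ {c | c < j}) u v := by
  by_cases hsub : {c : Fin n | c < j} ⊆ A
  · have hss : {c : Fin n | c < j} ⊆ A ∩ {c | c < j} := fun x hx => ⟨hsub hx, hx⟩
    exact M.reach_mono hss h1
  · obtain ⟨d0, hd0A, hd0j⟩ := Set.not_subset.mp hsub
    obtain ⟨d, hd, hdmax⟩ := Set.exists_max_image {x : Fin n | x < j ∧ x ∉ A} id
      (Set.toFinite _) ⟨d0, hd0A, hd0j⟩
    obtain ⟨hdj, hdA⟩ := hd
    obtain ⟨m, hum, hmv⟩ := M.reach_split' hdA h2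
    have hs1 : A ∩ {x | x < d} ⊆ {c | c < j} := fun x hx => lt_trans hx.2 hdj
    have hmu : M.ReachIn {c | c < j} m u := M.reach_mono hs1 (M.reach_symm hum)
    have hm2 : M.ReachIn {c | c < j} m v := M.reach_trans hmu h1
    have hs2 : A ∩ {x | d < x} ⊆ {c | d < c} := fun x hx => hx.2
    have hm1 : M.ReachIn {c | d < c} m v := M.reach_mono hs2 hmv
    have hmid := hW d j hdj m v hm1 hm2
    have hs3 : {c : Fin n | d < c ∧ c < j} ⊆ A ∩ {c | c < j} := by
      intro x hx
      refine ⟨?_, hx.2⟩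
      by_contra hxA
      exact absurd hx.1 (not_lt.mpr (hdmax x ⟨hx.2, hxA⟩))
    have hmid' : M.ReachIn (A ∩ {c | c < j}) m v := M.reach_mono hs3 hmid
    have hs4 : A ∩ {x | x < d} ⊆ A ∩ {c | c < j} :=
      fun x hx => ⟨hx.1, lt_trans hx.2 hdj⟩
    exact M.reach_trans (M.reach_mono hs4 hum) hmid'

/-- Removing a single colour from a path, given a path avoiding that colour. -/
lemma reach_remove (hW : M.WPIP) {A : Set (Fin n)} {c : Fin n} {u v : V}
    (hA : M.ReachIn A u v) (hc : M.ReachIn {x | x ≠ c} u v) :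
    M.ReachIn (A \ {c}) u v := by
  obtain ⟨m, h1, h2⟩ := M.reach_split (A := {x | x ≠ c}) (fun h => h rfl) hc
  have ha1 : {x : Fin n | x ≠ c} ∩ {x | c < x} ⊆ {x | c < x} := fun x hx => hx.2
  have ha2 : {x : Fin n | x ≠ c} ∩ {x | x < c} ⊆ {x | x < c} := fun x hx => hx.2
  have h1' : M.ReachIn {x | c < x} u m := M.reach_mono ha1 h1
  have h2' : M.ReachIn {x | x < c} m v := M.reach_mono ha2 h2
  have hAm : M.ReachIn (A ∪ {x | x < c}) u m :=
    M.reach_trans (M.reach_mono Set.subset_union_left hA)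
      (M.reach_mono Set.subset_union_right (M.reach_symm h2'))
  have hu := M.reach_inter_up hW h1' hAm
  have hmA : M.ReachIn (A ∪ {x | c < x}) m v :=
    M.reach_trans (M.reach_mono Set.subset_union_right (M.reach_symm h1'))
      (M.reach_mono Set.subset_union_left hA)
  have hv := M.reach_inter_down hW h2' hmA
  have hb1 : (A ∪ {x | x < c}) ∩ {c_1 | c < c_1} ⊆ A \ {c} := by
    rintro x ⟨hx1, hx2⟩
    have hcx : c < x := hx2
    refine ⟨hx1.resolve_right (fun h => absurd hcx (not_lt.mpr (le_of_lt h))), ?_⟩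
    simp only [Set.mem_singleton_iff]
    exact fun h => absurd hcx (h ▸ lt_irrefl c)
  have hb2 : (A ∪ {x | c < x}) ∩ {c_1 | c_1 < c} ⊆ A \ {c} := by
    rintro x ⟨hx1, hx2⟩
    have hcx : x < c := hx2
    refine ⟨hx1.resolve_right (fun h => absurd hcx (not_lt.mpr (le_of_lt h))), ?_⟩
    simp only [Set.mem_singleton_iff]
    exact fun h => absurd hcx (h ▸ lt_irrefl c)
  exact M.reach_trans (M.reach_mono hb1 hu) (M.reach_mono hb2 hv)

end Aux

end Maniplex
/-- A maniplex has the strong path intersection property if and only if it has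
the weak path intersection property. -/
theorem spip_iff_wpip {n : ℕ} {V : Type} (M : Maniplex n V) :
    M.SPIP ↔ M.WPIP := by
  constructor
  · intro hS i j _ u v h1 h2
    have hss : {c | i < c} ∩ {c | c < j} ⊆ {c : Fin n | i < c ∧ c < j} :=
      fun x hx => ⟨hx.1, hx.2⟩
    exact M.reach_mono hss (hS _ _ u v h1 h2)
  · intro hW A B u v hA hB
    have key : ∀ k (A : Set (Fin n)), (A \ B).ncard = k → M.ReachIn A u v →
        M.ReachIn (A ∩ B) u v := by
      intro k
      induction k using Nat.strong_induction_on with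
      | _ k ih =>
        intro A hk hA
        by_cases hsub : A ⊆ B
        · have hss : A ⊆ A ∩ B := fun x hx => ⟨hx, hsub hx⟩
          exact M.reach_mono hss hA
        · obtain ⟨c, hcA, hcB⟩ := Set.not_subset.mp hsub
          have hcs : B ⊆ {x | x ≠ c} := fun x hx he => hcB (he ▸ hx)
          have hc : M.ReachIn {x | x ≠ c} u v := M.reach_mono hcs hB
          have h' := M.reach_remove hW hA hc
          have hss : (A \ {c}) \ B ⊂ A \ B := by
            refine ⟨fun x hx => ⟨hx.1.1, hx.2⟩, fun hsub2 => ?_⟩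
            have := hsub2 ⟨hcA, hcB⟩
            exact this.1.2 rfl
          have hlt : ((A \ {c}) \ B).ncard < k :=
            hk ▸ Set.ncard_lt_ncard hss (Set.toFinite _)
          have hfs : (A \ {c}) ∩ B ⊆ A ∩ B := fun x hx => ⟨hx.1.1, hx.2⟩
          exact M.reach_mono hfs (ih _ hlt (A \ {c}) rfl h')
    exact key _ A rfl hA
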